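/- Let u : [0,b] → ℝ be absolutely continuous with u(0) = u(b), and suppose u'(t) ≤ −c·u(t) + g(t) for almost all t ∈ [0,b], where c > 0, g ∈ L¹(0,b) with g ≥ 0, and u ≥ 0. Then u(0) ≤ (e^{cb}/(e^{cb} − 1)) ∫₀ᵇ g(s) ds, and consequently u(t) ≤ (e^{cb}/(e^{cb} − 1)) ∫₀ᵇ g(s) ds + ∫₀ᵗ g(s) ds for all t ∈ [0,b]. -/

import Mathlib

open MeasureTheory intervalIntegral

/-- Gronwall-type a priori bound for periodic functions:
if `u' ≤ −c u + g` a.e. on `[0,b]`, `u ≥ 0`, `u(0) = u(b)`, then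
`u(0) ≤ e^{cb}/(e^{cb} − 1) ∫₀ᵇ g` and
`u(t) ≤ e^{cb}/(e^{cb} − 1) ∫₀ᵇ g + ∫₀ᵗ g` for all `t ∈ [0,b]`. -/
theorem periodic_gronwall_bound
    (b c : ℝ) (hb : 0 < b) (hc : 0 < c)
    (u u' g : ℝ → ℝ)
    (hu' : IntegrableOn u' (Set.Icc 0 b))
    (hAC : ∀ t ∈ Set.Icc (0:ℝ) b, u t = u 0 + ∫ s in (0:ℝ)..t, u' s)
    (hper : u 0 = u b)
    (hupos : ∀ t ∈ Set.Icc (0:ℝ) b, 0 ≤ u t)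
    (hg : IntegrableOn g (Set.Icc 0 b))
    (hgpos : ∀ t ∈ Set.Icc (0:ℝ) b, 0 ≤ g t)
    (hineq : ∀ᵐ t ∂(volume.restrict (Set.Icc (0:ℝ) b)),
      u' t ≤ -c * u t + g t) :
    u 0 ≤ (Real.exp (c * b) / (Real.exp (c * b) - 1)) * ∫ s in (0:ℝ)..b, g s ∧
    ∀ t ∈ Set.Icc (0:ℝ) b,
      u t ≤ (Real.exp (c * b) / (Real.exp (c * b) - 1)) * (∫ s in (0:ℝ)..b, g s)
        + ∫ s in (0:ℝ)..t, g s := by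
  have hcb : (0:ℝ) < c * b := mul_pos hc hb
  have hE1 : (1:ℝ) < Real.exp (c * b) := by
    calc (1:ℝ) = Real.exp 0 := Real.exp_zero.symm
    _ < Real.exp (c * b) := Real.exp_lt_exp.mpr hcb
  have hEpos : (0:ℝ) < Real.exp (c * b) - 1 := sub_pos.mpr hE1
  have hcexp : Continuous fun s : ℝ => c * Real.exp (c * s) := by continuity
  have hu'Ioc : IntegrableOn u' (Set.Ioc 0 b) := hu'.mono_set Set.Ioc_subset_Icc_self
  have hgIoc : IntegrableOn g (Set.Ioc 0 b) := hg.mono_set Set.Ioc_subset_Icc_self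
  -- FTC for the exponential
  have hderiv : ∀ x : ℝ, HasDerivAt (fun s => Real.exp (c * s)) (c * Real.exp (c * x)) x := by
    intro x
    have h1 : HasDerivAt (fun s : ℝ => c * s) c x := by
      simpa using (hasDerivAt_id x).const_mul c
    simpa [mul_comm] using h1.exp
  have hexpint : ∀ r : ℝ, r ≤ b →
      (∫ s in Set.Ioc r b, c * Real.exp (c * s)) = Real.exp (c * b) - Real.exp (c * r) := by
    intro r hr
    rw [← intervalIntegral.integral_of_le hr]
    exact intervalIntegral.integral_eq_sub_of_hasDerivAt (fun x _ => hderiv x)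
      (hcexp.intervalIntegrable r b)
  -- Fubini for the triangle
  have fubini : (∫ s in Set.Ioc (0:ℝ) b, c * Real.exp (c * s) * (∫ r in Set.Ioc (0:ℝ) s, u' r))
      = ∫ r in Set.Ioc (0:ℝ) b, (Real.exp (c * b) - Real.exp (c * r)) * u' r := by
    set μ := volume.restrict (Set.Ioc (0:ℝ) b) with hμ
    set f : ℝ → ℝ → ℝ := fun s r => if r ≤ s then c * Real.exp (c * s) * u' r else 0 with hf
    have hmeasT : MeasurableSet {p : ℝ × ℝ | p.2 ≤ p.1} :=
      measurableSet_le measurable_snd measurable_fst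
    have hint : Integrable (Function.uncurry f) (μ.prod μ) := by
      have hbase : Integrable (fun p : ℝ × ℝ => (c * Real.exp (c * p.1)) * u' p.2) (μ.prod μ) := by
        exact Integrable.mul_prod (μ := μ) (ν := μ) (f := fun s => c * Real.exp (c * s))
          (g := u') hcexp.integrableOn_Ioc hu'Ioc
      have : Function.uncurry f =
          Set.indicator {p : ℝ × ℝ | p.2 ≤ p.1}
            (fun p : ℝ × ℝ => (c * Real.exp (c * p.1)) * u' p.2) := by
        ext p
        by_cases h : p.2 ≤ p.1 <;>
          simp [Function.uncurry, hf, h, Set.indicator_apply, Set.mem_setOf_eq]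
      rw [this]
      exact hbase.indicator hmeasT
    have lhs_eq : (∫ s in Set.Ioc (0:ℝ) b, c * Real.exp (c * s) * (∫ r in Set.Ioc (0:ℝ) s, u' r))
        = ∫ s, ∫ r, f s r ∂μ ∂μ := by
      refine integral_congr_ae ?_
      filter_upwards [ae_restrict_mem measurableSet_Ioc] with s hs
      have h1 : (fun r => f s r) = (Set.Iic s).indicator (fun r => c * Real.exp (c * s) * u' r) := by
        ext r
        by_cases h : r ≤ s <;> simp [hf, h, Set.indicator_apply]
      rw [h1, MeasureTheory.integral_indicator measurableSet_Iic, hμ,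
        Measure.restrict_restrict measurableSet_Iic]
      have h2 : Set.Iic s ∩ Set.Ioc 0 b = Set.Ioc 0 s := by
        rw [Set.inter_comm, Set.Ioc_inter_Iic, min_eq_right hs.2]
      rw [h2, MeasureTheory.integral_const_mul]
    have rhs_eq : (∫ r, ∫ s, f s r ∂μ ∂μ)
        = ∫ r in Set.Ioc (0:ℝ) b, (Real.exp (c * b) - Real.exp (c * r)) * u' r := by
      refine integral_congr_ae ?_
      filter_upwards [ae_restrict_mem measurableSet_Ioc] with r hr
      have h1 : (fun s => f s r) = (Set.Ici r).indicator (fun s => c * Real.exp (c * s) * u' r) := by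
        ext s
        by_cases h : r ≤ s <;> simp [hf, h, Set.indicator_apply]
      rw [h1, MeasureTheory.integral_indicator measurableSet_Ici, hμ,
        Measure.restrict_restrict measurableSet_Ici]
      have h2 : Set.Ici r ∩ Set.Ioc 0 b = Set.Icc r b := by
        ext x
        simp only [Set.mem_inter_iff, Set.mem_Ici, Set.mem_Ioc, Set.mem_Icc]
        constructor
        · rintro ⟨ha, _, hb'⟩; exact ⟨ha, hb'⟩
        · rintro ⟨ha, hb'⟩; exact ⟨ha, lt_of_lt_of_le hr.1 ha, hb'⟩
      rw [h2, MeasureTheory.integral_Icc_eq_integral_Ioc]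
      have h3 : (fun s => c * Real.exp (c * s) * u' r)
          = fun s => (c * Real.exp (c * s)) * u' r := rfl
      rw [h3, MeasureTheory.integral_mul_const, hexpint r hr.2]
    rw [lhs_eq, integral_integral_swap hint, rhs_eq]
  -- integrability pieces
  have haes_exp : AEStronglyMeasurable (fun s => Real.exp (c * s))
      (volume.restrict (Set.Ioc (0:ℝ) b)) :=
    (Real.continuous_exp.comp (continuous_const.mul continuous_id)).aestronglyMeasurable
  have hexp_le : ∀ s ∈ Set.Ioc (0:ℝ) b, Real.exp (c * s) ≤ Real.exp (c * b) := by
    intro s hs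
    exact Real.exp_le_exp.mpr (by nlinarith [hs.2])
  have h1 : IntegrableOn (fun s => Real.exp (c * s) * u' s) (Set.Ioc 0 b) := by
    refine Integrable.mono' (hu'Ioc.norm.const_mul (Real.exp (c * b)))
      (haes_exp.mul hu'Ioc.aestronglyMeasurable) ?_
    filter_upwards [ae_restrict_mem measurableSet_Ioc] with s hs
    rw [norm_mul, Real.norm_eq_abs, abs_of_pos (Real.exp_pos _)]
    exact mul_le_mul_of_nonneg_right (hexp_le s hs) (norm_nonneg _)
  have h1g : IntegrableOn (fun s => Real.exp (c * s) * g s) (Set.Ioc 0 b) := by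
    refine Integrable.mono' (hgIoc.norm.const_mul (Real.exp (c * b)))
      (haes_exp.mul hgIoc.aestronglyMeasurable) ?_
    filter_upwards [ae_restrict_mem measurableSet_Ioc] with s hs
    rw [norm_mul, Real.norm_eq_abs, abs_of_pos (Real.exp_pos _)]
    exact mul_le_mul_of_nonneg_right (hexp_le s hs) (norm_nonneg _)
  have h2 : IntegrableOn (fun s => c * Real.exp (c * s) * u 0) (Set.Ioc 0 b) :=
    (hcexp.mul continuous_const).integrableOn_Ioc
  have hWcont : ContinuousOn (fun s => ∫ r in Set.Ioc (0:ℝ) s, u' r) (Set.Icc 0 b) :=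
    continuousOn_primitive hu'
  have h3 : IntegrableOn (fun s => c * Real.exp (c * s) * (∫ r in Set.Ioc (0:ℝ) s, u' r))
      (Set.Ioc 0 b) := by
    refine Integrable.mono'
      (g := fun _ => c * Real.exp (c * b) * (∫ r in Set.Ioc (0:ℝ) b, ‖u' r‖))
      (integrableOn_const measure_Ioc_lt_top.ne) ?_ ?_
    · exact hcexp.aestronglyMeasurable.mul
        ((hWcont.mono Set.Ioc_subset_Icc_self).aestronglyMeasurable measurableSet_Ioc)
    · filter_upwards [ae_restrict_mem measurableSet_Ioc] with s hs
      rw [norm_mul, norm_mul, Real.norm_eq_abs, Real.norm_eq_abs,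
        abs_of_pos hc, abs_of_pos (Real.exp_pos _)]
      have hWle : ‖∫ r in Set.Ioc (0:ℝ) s, u' r‖ ≤ ∫ r in Set.Ioc (0:ℝ) b, ‖u' r‖ := by
        refine (MeasureTheory.norm_integral_le_integral_norm _).trans ?_
        exact setIntegral_mono_set hu'Ioc.norm
          (Filter.Eventually.of_forall fun r => norm_nonneg _)
          (HasSubset.Subset.eventuallyLE (Set.Ioc_subset_Ioc_right hs.2))
      calc c * Real.exp (c * s) * ‖∫ r in Set.Ioc (0:ℝ) s, u' r‖
          ≤ c * Real.exp (c * b) * ‖∫ r in Set.Ioc (0:ℝ) s, u' r‖ := by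
            apply mul_le_mul_of_nonneg_right _ (norm_nonneg _)
            exact mul_le_mul_of_nonneg_left (hexp_le s hs) hc.le
        _ ≤ c * Real.exp (c * b) * (∫ r in Set.Ioc (0:ℝ) b, ‖u' r‖) := by
            apply mul_le_mul_of_nonneg_left hWle
            positivity
  -- the pointwise decomposition on (0, b]
  have hdecomp : ∀ s ∈ Set.Ioc (0:ℝ) b,
      Real.exp (c * s) * (u' s + c * u s)
        = Real.exp (c * s) * u' s + c * Real.exp (c * s) * u 0
          + c * Real.exp (c * s) * (∫ r in Set.Ioc (0:ℝ) s, u' r) := by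
    intro s hs
    have hs' : s ∈ Set.Icc (0:ℝ) b := Set.Ioc_subset_Icc_self hs
    have := hAC s hs'
    rw [intervalIntegral.integral_of_le hs.1.le] at this
    rw [this]; ring
  -- key identity
  have hIb : (∫ r in Set.Ioc (0:ℝ) b, u' r) = 0 := by
    have := hAC b (Set.right_mem_Icc.mpr hb.le)
    rw [intervalIntegral.integral_of_le hb.le] at this
    rw [hper] at this
    linarith
  have key : (∫ s in Set.Ioc (0:ℝ) b, Real.exp (c * s) * (u' s + c * u s))
      = u 0 * (Real.exp (c * b) - 1) := by
    have hsplit : (∫ s in Set.Ioc (0:ℝ) b, Real.exp (c * s) * (u' s + c * u s))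
        = (∫ s in Set.Ioc (0:ℝ) b, Real.exp (c * s) * u' s)
          + (∫ s in Set.Ioc (0:ℝ) b, c * Real.exp (c * s) * u 0)
          + (∫ s in Set.Ioc (0:ℝ) b, c * Real.exp (c * s) * (∫ r in Set.Ioc (0:ℝ) s, u' r)) := by
      have h12 : Integrable (fun s => Real.exp (c * s) * u' s + c * Real.exp (c * s) * u 0)
          (volume.restrict (Set.Ioc (0:ℝ) b)) := h1.add h2
      have e1 : (∫ s in Set.Ioc (0:ℝ) b, Real.exp (c * s) * (u' s + c * u s))
          = ∫ s in Set.Ioc (0:ℝ) b,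
              ((Real.exp (c * s) * u' s + c * Real.exp (c * s) * u 0)
                + c * Real.exp (c * s) * (∫ r in Set.Ioc (0:ℝ) s, u' r)) := by
        refine integral_congr_ae ?_
        filter_upwards [ae_restrict_mem measurableSet_Ioc] with s hs
        rw [hdecomp s hs]
      rw [e1, integral_add h12 h3, integral_add h1 h2]
    have hmid : (∫ s in Set.Ioc (0:ℝ) b, c * Real.exp (c * s) * u 0)
        = u 0 * (Real.exp (c * b) - 1) := by
      have : (fun s => c * Real.exp (c * s) * u 0) = fun s => (c * Real.exp (c * s)) * u 0 := rfl
      rw [this, MeasureTheory.integral_mul_const, hexpint 0 hb.le]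
      simp [mul_comm]
    have hlast : (∫ s in Set.Ioc (0:ℝ) b, c * Real.exp (c * s) * (∫ r in Set.Ioc (0:ℝ) s, u' r))
        = - ∫ s in Set.Ioc (0:ℝ) b, Real.exp (c * s) * u' s := by
      rw [fubini]
      have hsub : (∫ r in Set.Ioc (0:ℝ) b, (Real.exp (c * b) - Real.exp (c * r)) * u' r)
          = (∫ r in Set.Ioc (0:ℝ) b, Real.exp (c * b) * u' r)
            - ∫ r in Set.Ioc (0:ℝ) b, Real.exp (c * r) * u' r := by
        rw [← integral_sub (hu'Ioc.const_mul _) h1]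
        refine integral_congr_ae (Filter.Eventually.of_forall fun r => ?_)
        ring
      rw [hsub, MeasureTheory.integral_const_mul, hIb]
      ring
    rw [hsplit, hmid, hlast]; ring
  -- the differential inequality integrated
  have hineqIoc : ∀ᵐ s ∂(volume.restrict (Set.Ioc (0:ℝ) b)), u' s ≤ -c * u s + g s :=
    ae_restrict_of_ae_restrict_of_subset Set.Ioc_subset_Icc_self hineq
  have hleft_int : Integrable (fun s => Real.exp (c * s) * (u' s + c * u s))
      (volume.restrict (Set.Ioc (0:ℝ) b)) := by
    refine Integrable.congr ((h1.add h2).add h3) ?_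
    filter_upwards [ae_restrict_mem measurableSet_Ioc] with s hs
    exact (hdecomp s hs).symm
  have hstep1 : u 0 * (Real.exp (c * b) - 1)
      ≤ ∫ s in Set.Ioc (0:ℝ) b, Real.exp (c * s) * g s := by
    rw [← key]
    refine integral_mono_ae hleft_int h1g ?_
    filter_upwards [hineqIoc] with s hs
    have := Real.exp_pos (c * s)
    nlinarith
  have hstep2 : (∫ s in Set.Ioc (0:ℝ) b, Real.exp (c * s) * g s)
      ≤ Real.exp (c * b) * ∫ s in Set.Ioc (0:ℝ) b, g s := by
    rw [← MeasureTheory.integral_const_mul]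
    refine integral_mono_ae h1g (hgIoc.const_mul _) ?_
    filter_upwards [ae_restrict_mem measurableSet_Ioc] with s hs
    exact mul_le_mul_of_nonneg_right (hexp_le s hs) (hgpos s (Set.Ioc_subset_Icc_self hs))
  have hGb : (∫ s in (0:ℝ)..b, g s) = ∫ s in Set.Ioc (0:ℝ) b, g s :=
    intervalIntegral.integral_of_le hb.le
  have part1 : u 0 ≤ (Real.exp (c * b) / (Real.exp (c * b) - 1)) * ∫ s in (0:ℝ)..b, g s := by
    rw [hGb, div_mul_eq_mul_div, le_div_iff₀ hEpos]
    calc u 0 * (Real.exp (c * b) - 1)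
        ≤ Real.exp (c * b) * ∫ s in Set.Ioc (0:ℝ) b, g s := hstep1.trans hstep2
      _ = Real.exp (c * b) * (∫ s in Set.Ioc (0:ℝ) b, g s) := rfl
  refine ⟨part1, ?_⟩
  -- second part
  intro t ht
  have hu'g : ∀ᵐ s ∂(volume.restrict (Set.Icc (0:ℝ) t)), u' s ≤ g s := by
    have : ∀ᵐ s ∂(volume.restrict (Set.Icc (0:ℝ) b)), u' s ≤ g s := by
      filter_upwards [hineq, ae_restrict_mem measurableSet_Icc] with s h1 h2
      nlinarith [hupos s h2]
    exact ae_restrict_of_ae_restrict_of_subset (Set.Icc_subset_Icc_right ht.2) this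
  have hiu : IntervalIntegrable u' volume 0 t := by
    rw [intervalIntegrable_iff_integrableOn_Icc_of_le ht.1]
    exact hu'.mono_set (Set.Icc_subset_Icc_right ht.2)
  have hig : IntervalIntegrable g volume 0 t := by
    rw [intervalIntegrable_iff_integrableOn_Icc_of_le ht.1]
    exact hg.mono_set (Set.Icc_subset_Icc_right ht.2)
  have hmono : (∫ s in (0:ℝ)..t, u' s) ≤ ∫ s in (0:ℝ)..t, g s :=
    intervalIntegral.integral_mono_ae_restrict ht.1 hiu hig hu'g
  calc u t = u 0 + ∫ s in (0:ℝ)..t, u' s := hAC t ht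
    _ ≤ u 0 + ∫ s in (0:ℝ)..t, g s := by linarith
    _ ≤ (Real.exp (c * b) / (Real.exp (c * b) - 1)) * (∫ s in (0:ℝ)..b, g s)
        + ∫ s in (0:ℝ)..t, g s := by linarith [part1]
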